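/- Let (K, ⟨−,−⟩, s) be an integral Serre lattice of surface type equipped with a codimension filtration (F¹, F²), and let z ∈ F²K. On K̃ := ℤ·f ⊕ K define the bilinear form extending ⟨−,−⟩ by ⟨f, f⟩ = 1, ⟨x, f⟩ = 0 and ⟨f, y⟩ = ⟨z, y⟩ for x, y ∈ K, and define s̃ by s̃(f) = f + z and s̃(y) = s(y) − ⟨y, z⟩·f for y ∈ K. Then (K̃, ⟨−,−⟩, s̃) is an integral Serre lattice (the extended form is nondegenerate, s̃ is an automorphism, and ⟨x, s̃ y⟩ = ⟨y, x⟩ for all x, y ∈ K̃) of surface type, and F¹K̃ := F¹K ⊕ ℤ·f, F²K̃ := F²K (extended to ℚ-subspaces of K̃ ⊗ ℚ) is a codimension filtration on K̃. -/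

import Mathlib

open TensorProduct

variable {K : Type*} [AddCommGroup K]

/-- The blowup bilinear form on `K̃ = ℤ·f ⊕ K` (realized as `ℤ × K`, with `f = (1,0)`):
`⟨f,f⟩ = 1`, `⟨x,f⟩ = 0`, `⟨f,y⟩ = ⟨z,y⟩` for `x, y ∈ K`. -/
def blowupForm (B : K →ₗ[ℤ] K →ₗ[ℤ] ℤ) (z : K) :
    (ℤ × K) →ₗ[ℤ] (ℤ × K) →ₗ[ℤ] ℤ :=
  LinearMap.mk₂ ℤ (fun p q => p.1 * q.1 + p.1 * B z q.2 + B p.2 q.2)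
    (by intro p p' q; simp [add_mul]; ring)
    (by intro c p q; simp [smul_eq_mul]; ring)
    (by intro p q q'; simp [mul_add]; ring)
    (by intro c p q; simp [smul_eq_mul]; ring)

/-- The blowup Serre automorphism on `ℤ × K`: `s̃(f) = f + z`, `s̃(y) = s(y) − ⟨y,z⟩·f`. -/
def blowupAut (B : K →ₗ[ℤ] K →ₗ[ℤ] ℤ) (s : K →ₗ[ℤ] K) (z : K) :
    (ℤ × K) →ₗ[ℤ] (ℤ × K) where
  toFun p := (p.1 - B p.2 z, p.1 • z + s p.2)
  map_add' p q := by
    ext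
    · simp; ring
    · simp only [Prod.fst_add, Prod.snd_add, map_add, LinearMap.add_apply, add_smul,
        Prod.mk_add_mk]
      abel
  map_smul' c p := by
    ext
    · simp [smul_eq_mul]; ring
    · simp only [Prod.smul_fst, Prod.smul_snd, smul_eq_mul, map_smul, smul_add, mul_smul,
        RingHom.id_apply]

/-- An integral Serre lattice is of surface type if the base-changed automorphism
`s_ℚ` on `V := ℚ ⊗ K` is unipotent and `rank(s_ℚ − 1) ≤ 2`. -/
def IsSurfaceType {K : Type*} [AddCommGroup K] (s : K →ₗ[ℤ] K) : Prop :=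
  (LinearMap.baseChange ℚ s - 1) ^ (Module.finrank ℚ (ℚ ⊗[ℤ] K)) = 0 ∧
    Module.finrank ℚ (LinearMap.range (LinearMap.baseChange ℚ s - 1)) ≤ 2

/-- A codimension filtration on an integral Serre lattice of surface type: ℚ-subspaces
`F² ⊆ F¹` of `V = ℚ ⊗ K` with `(s−1)V ⊆ F¹`, `(s−1)F¹ ⊆ F²`, `(s−1)F² = 0`,
`dim F¹ = n − 1`, `dim F² = 1` and `⟨F¹, F²⟩ = 0`. -/
def IsCodimFiltration {K : Type*} [AddCommGroup K] (B : K →ₗ[ℤ] K →ₗ[ℤ] ℤ)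
    (s : K →ₗ[ℤ] K) (F1 F2 : Submodule ℚ (ℚ ⊗[ℤ] K)) : Prop :=
  F2 ≤ F1 ∧
    LinearMap.range (LinearMap.baseChange ℚ s - 1) ≤ F1 ∧
    Submodule.map (LinearMap.baseChange ℚ s - 1) F1 ≤ F2 ∧
    Submodule.map (LinearMap.baseChange ℚ s - 1) F2 = ⊥ ∧
    Module.finrank ℚ F1 = Module.finrank ℚ (ℚ ⊗[ℤ] K) - 1 ∧
    Module.finrank ℚ F2 = 1 ∧
    ∀ v ∈ F1, ∀ w ∈ F2, LinearMap.BilinForm.baseChange ℚ B v w = 0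



/-- ext helper: ℚ-linear maps out of ℚ ⊗[ℤ] M agree if they agree on 1 ⊗ x -/
theorem qext {M N : Type*} [AddCommGroup M] [AddCommGroup N] [Module ℚ N]
    {f g : ℚ ⊗[ℤ] M →ₗ[ℚ] N} (h : ∀ x : M, f ((1:ℚ) ⊗ₜ[ℤ] x) = g ((1:ℚ) ⊗ₜ[ℤ] x)) :
    f = g := by
  apply LinearMap.restrictScalars_injective ℤ
  apply TensorProduct.ext'
  intro c x
  have hc : c ⊗ₜ[ℤ] x = c • ((1:ℚ) ⊗ₜ[ℤ] x) := by
    rw [TensorProduct.smul_tmul', smul_eq_mul, mul_one]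
  show f (c ⊗ₜ[ℤ] x) = g (c ⊗ₜ[ℤ] x)
  rw [hc, map_smul, map_smul, h]

noncomputable def eqv {K : Type*} [AddCommGroup K] :
    (ℚ ⊗[ℤ] (ℤ × K)) ≃ₗ[ℚ] ℚ × (ℚ ⊗[ℤ] K) :=
  LinearEquiv.ofLinear
    (LinearMap.prod
      (((Algebra.TensorProduct.rid ℤ ℚ ℚ).toLinearMap.comp
        (LinearMap.baseChange ℚ (Algebra.linearMap ℤ ℤ))).comp
        (LinearMap.baseChange ℚ (LinearMap.fst ℤ ℤ K)))
      (LinearMap.baseChange ℚ (LinearMap.snd ℤ ℤ K)))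
    (LinearMap.coprod (LinearMap.toSpanSingleton ℚ _ ((1:ℚ) ⊗ₜ[ℤ] ((1,0) : ℤ × K)))
      (LinearMap.baseChange ℚ (LinearMap.inr ℤ ℤ K)))
    (by
      apply LinearMap.prod_ext
      · apply LinearMap.ext_ring
        simp [Algebra.TensorProduct.rid_tmul]
      · apply qext
        intro y
        simp [Algebra.TensorProduct.rid_tmul])
    (by
      apply qext
      intro p
      obtain ⟨a, y⟩ := p
      have h1 : ((a:ℚ)) • ((1:ℚ) ⊗ₜ[ℤ] ((1,0) : ℤ × K)) = (1:ℚ) ⊗ₜ[ℤ] ((a,0) : ℤ × K) := by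
        rw [Int.cast_smul_eq_zsmul, ← TensorProduct.tmul_smul]
        norm_num
      simp [Algebra.TensorProduct.rid_tmul, h1, ← TensorProduct.tmul_add])

@[simp] theorem eqv_tmul {K : Type*} [AddCommGroup K] (c : ℚ) (a : ℤ) (y : K) :
    eqv (c ⊗ₜ[ℤ] ((a, y) : ℤ × K)) = (c * (a:ℚ), c ⊗ₜ[ℤ] y) := by
  simp [eqv, Algebra.TensorProduct.rid_tmul, zsmul_eq_mul, mul_comm]

theorem eqv_comp_inr {K : Type*} [AddCommGroup K] :
    (eqv (K := K)).toLinearMap ∘ₗ LinearMap.baseChange ℚ (LinearMap.inr ℤ ℤ K)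
      = LinearMap.inr ℚ ℚ (ℚ ⊗[ℤ] K) := by
  apply qext; intro y; simp


/-- ℚ-level model of the blowup automorphism on `ℚ × (ℚ ⊗ K)`. -/
noncomputable def Sq (B : K →ₗ[ℤ] K →ₗ[ℤ] ℤ) (s : K →ₗ[ℤ] K) (z : K) :
    (ℚ × (ℚ ⊗[ℤ] K)) →ₗ[ℚ] (ℚ × (ℚ ⊗[ℤ] K)) :=
  (LinearMap.fst ℚ ℚ _ -
      ((LinearMap.BilinForm.baseChange ℚ B).flip ((1:ℚ) ⊗ₜ[ℤ] z)) ∘ₗ LinearMap.snd ℚ ℚ _).prod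
    ((LinearMap.fst ℚ ℚ _).smulRight ((1:ℚ) ⊗ₜ[ℤ] z) +
      (LinearMap.baseChange ℚ s) ∘ₗ LinearMap.snd ℚ ℚ _)

theorem Sq_apply (B : K →ₗ[ℤ] K →ₗ[ℤ] ℤ) (s : K →ₗ[ℤ] K) (z : K) (p : ℚ × (ℚ ⊗[ℤ] K)) :
    Sq B s z p = (p.1 - LinearMap.BilinForm.baseChange ℚ B p.2 ((1:ℚ) ⊗ₜ[ℤ] z),
      p.1 • ((1:ℚ) ⊗ₜ[ℤ] z) + LinearMap.baseChange ℚ s p.2) := by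
  simp [Sq]

theorem conj_blowupAut (B : K →ₗ[ℤ] K →ₗ[ℤ] ℤ) (s : K →ₗ[ℤ] K) (z : K) :
    LinearMap.baseChange ℚ (blowupAut B s z)
      = eqv.symm.toLinearMap ∘ₗ Sq B s z ∘ₗ eqv.toLinearMap := by
  have H : (eqv (K := K)).toLinearMap ∘ₗ LinearMap.baseChange ℚ (blowupAut B s z)
      = Sq B s z ∘ₗ eqv.toLinearMap := by
    apply qext
    intro p
    obtain ⟨a, y⟩ := p
    have hsm : (1:ℚ) ⊗ₜ[ℤ] (a • z) = (a:ℚ) • ((1:ℚ) ⊗ₜ[ℤ] z) := by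
      rw [Int.cast_smul_eq_zsmul, TensorProduct.tmul_smul]
    simp only [LinearMap.comp_apply, LinearEquiv.coe_coe, LinearMap.baseChange_tmul,
      blowupAut, LinearMap.coe_mk, AddHom.coe_mk, eqv_tmul, Sq_apply, one_mul,
      TensorProduct.tmul_add, hsm]
    refine Prod.ext ?_ rfl
    simp only [LinearMap.BilinForm.baseChange_tmul, smul_eq_mul, zsmul_eq_mul, mul_one]
    push_cast
    ring
  apply LinearMap.ext
  intro u
  apply eqv.injective
  have := DFunLike.congr_fun H u
  simpa using this



theorem blowupForm_apply (B : K →ₗ[ℤ] K →ₗ[ℤ] ℤ) (z : K) (p q : ℤ × K) :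
    blowupForm B z p q = p.1 * q.1 + p.1 * B z q.2 + B p.2 q.2 := rfl

theorem blowupAut_apply (B : K →ₗ[ℤ] K →ₗ[ℤ] ℤ) (s : K →ₗ[ℤ] K) (z : K) (p : ℤ × K) :
    blowupAut B s z p = (p.1 - B p.2 z, p.1 • z + s p.2) := rfl

theorem hB1 (B : K →ₗ[ℤ] K →ₗ[ℤ] ℤ) (z : K) (v w : ℚ ⊗[ℤ] K) :
    LinearMap.BilinForm.baseChange ℚ (blowupForm B z)
        (LinearMap.baseChange ℚ (LinearMap.inr ℤ ℤ K) v)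
        (LinearMap.baseChange ℚ (LinearMap.inr ℤ ℤ K) w)
      = LinearMap.BilinForm.baseChange ℚ B v w := by
  have h : ((LinearMap.BilinForm.baseChange ℚ (blowupForm B z)).compl₂
        (LinearMap.baseChange ℚ (LinearMap.inr ℤ ℤ K))) ∘ₗ
        (LinearMap.baseChange ℚ (LinearMap.inr ℤ ℤ K))
      = LinearMap.BilinForm.baseChange ℚ B := by
    apply qext; intro x
    apply qext; intro y
    simp [blowupForm_apply]
  have := DFunLike.congr_fun (DFunLike.congr_fun h v) w
  simpa using this

theorem hB2 (B : K →ₗ[ℤ] K →ₗ[ℤ] ℤ) (z : K) (w : ℚ ⊗[ℤ] K) :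
    LinearMap.BilinForm.baseChange ℚ (blowupForm B z)
        ((1:ℚ) ⊗ₜ[ℤ] ((1,0) : ℤ × K))
        (LinearMap.baseChange ℚ (LinearMap.inr ℤ ℤ K) w)
      = LinearMap.BilinForm.baseChange ℚ B ((1:ℚ) ⊗ₜ[ℤ] z) w := by
  have h : (LinearMap.BilinForm.baseChange ℚ (blowupForm B z)
        ((1:ℚ) ⊗ₜ[ℤ] ((1,0) : ℤ × K))) ∘ₗ (LinearMap.baseChange ℚ (LinearMap.inr ℤ ℤ K))
      = LinearMap.BilinForm.baseChange ℚ B ((1:ℚ) ⊗ₜ[ℤ] z) := by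
    apply qext; intro y
    simp [blowupForm_apply]
  have := DFunLike.congr_fun h w
  simpa using this

theorem map_map_symm {M N : Type*} [AddCommGroup M] [AddCommGroup N] [Module ℚ M] [Module ℚ N]
    (e : M ≃ₗ[ℚ] N) (p : Submodule ℚ M) :
    Submodule.map e.symm.toLinearMap (Submodule.map e.toLinearMap p) = p := by
  rw [← Submodule.map_comp]
  have h : e.symm.toLinearMap ∘ₗ e.toLinearMap = LinearMap.id := by ext x; simp
  rw [h, Submodule.map_id]

set_option maxHeartbeats 2000000 in
/-- the numerical blowup `K̃ = ℤ·f ⊕ K` of an integral Serre lattice of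
surface type (with codimension filtration `(F¹, F²)`) at `z ∈ F²K` is again an integral
Serre lattice of surface type, and `F¹K̃ := F¹K ⊕ ℤ·f`, `F²K̃ := F²K` is a codimension
filtration on it. -/
theorem blowup_is_surface_type (K : Type*) [AddCommGroup K]
    [Module.Free ℤ K] [Module.Finite ℤ K]
    (B : K →ₗ[ℤ] K →ₗ[ℤ] ℤ) (hB : ∀ v, (∀ w, B v w = 0) → v = 0)
    (s : K →ₗ[ℤ] K) (hbij : Function.Bijective s)
    (hserre : ∀ v w, B v (s w) = B w v)
    (hsurf : IsSurfaceType s)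
    (F1 F2 : Submodule ℚ (ℚ ⊗[ℤ] K)) (hfil : IsCodimFiltration B s F1 F2)
    (z : K) (hz : (1 : ℚ) ⊗ₜ[ℤ] z ∈ F2) :
    (∀ p : ℤ × K, (∀ q, blowupForm B z p q = 0) → p = 0) ∧
      Function.Bijective (blowupAut B s z) ∧
      (∀ p q : ℤ × K, blowupForm B z p (blowupAut B s z q) = blowupForm B z q p) ∧
      IsSurfaceType (blowupAut B s z) ∧
      IsCodimFiltration (blowupForm B z) (blowupAut B s z)
        (Submodule.map (LinearMap.baseChange ℚ (LinearMap.inr ℤ ℤ K)) F1 ⊔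
          Submodule.span ℚ {(1 : ℚ) ⊗ₜ[ℤ] (((1 : ℤ), (0 : K)) : ℤ × K)})
        (Submodule.map (LinearMap.baseChange ℚ (LinearMap.inr ℤ ℤ K)) F2) := by
  classical
  obtain ⟨hF21, hrange, hmapF1, hmapF2, hd1, hd2, horth⟩ := hfil
  set V := ℚ ⊗[ℤ] K with hV
  set Bq := LinearMap.BilinForm.baseChange ℚ B with hBq
  set tq := LinearMap.baseChange ℚ s - 1 with htq
  set zt : V := (1:ℚ) ⊗ₜ[ℤ] z with hzt
  -- basic facts
  have hzF1 : zt ∈ F1 := hF21 hz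
  have htzq : tq zt = 0 := by
    have : tq zt ∈ Submodule.map tq F2 := Submodule.mem_map_of_mem hz
    rw [hmapF2] at this
    simpa using this
  have hBqtm : ∀ x y : K, Bq ((1:ℚ) ⊗ₜ[ℤ] x) ((1:ℚ) ⊗ₜ[ℤ] y) = ((B x y : ℤ) : ℚ) := by
    intro x y
    simp [hBq, LinearMap.BilinForm.baseChange_tmul, zsmul_eq_mul]
  have hBzz : B z z = 0 := by
    have h0 : Bq zt zt = 0 := horth zt hzF1 zt hz
    rw [hzt, hBqtm] at h0
    exact_mod_cast h0
  have hszq : (1:ℚ) ⊗ₜ[ℤ] (s z) = zt := by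
    have : LinearMap.baseChange ℚ s zt - zt = 0 := by
      have := htzq
      simpa [htq, LinearMap.sub_apply] using this
    have h2 : LinearMap.baseChange ℚ s zt = zt := by linear_combination (norm := abel) this
    simpa [hzt] using h2
  have hBxz : ∀ x : K, B x z = B z x := by
    intro x
    have h1 : B x (s z) = B z x := hserre x z
    have h2 : B x (s z) = B x z := by
      have hc : ((B x (s z - z) : ℤ) : ℚ) = 0 := by
        rw [← hBqtm]
        have : (1:ℚ) ⊗ₜ[ℤ] (s z - z) = 0 := by
          rw [TensorProduct.tmul_sub, hszq, sub_self]
        rw [this, map_zero]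
      have : B x (s z - z) = 0 := by exact_mod_cast hc
      rw [map_sub] at this
      omega
    omega
  -- the integral inverse of s
  set es := LinearEquiv.ofBijective s hbij with hes
  have hsi : ∀ x, s (es.symm x) = x := fun x => es.apply_symm_apply x
  have hsiz : (1:ℚ) ⊗ₜ[ℤ] (es.symm z : K) = zt := by
    have hinj : Function.Injective (LinearMap.baseChange ℚ s) := by
      have hli : (LinearMap.baseChange ℚ (es.symm : K →ₗ[ℤ] K)) ∘ₗ
          (LinearMap.baseChange ℚ s) = LinearMap.id := by
        rw [← LinearMap.baseChange_comp]
        have : (es.symm : K →ₗ[ℤ] K) ∘ₗ s = LinearMap.id := by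
          ext x; simp [hes]
        rw [this, LinearMap.baseChange_id]
      intro a b hab
      have := congrArg (LinearMap.baseChange ℚ (es.symm : K →ₗ[ℤ] K)) hab
      simpa [← LinearMap.comp_apply, hli] using this
    apply hinj
    have h1 : LinearMap.baseChange ℚ s ((1:ℚ) ⊗ₜ[ℤ] (es.symm z : K)) = zt := by
      simp [LinearMap.baseChange_tmul, hsi, hzt]
    have h2 : LinearMap.baseChange ℚ s zt = zt := by
      have : tq zt = 0 := htzq
      rw [htq] at this
      have := sub_eq_zero.mp (by simpa [LinearMap.sub_apply] using this)
      simpa using this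
    rw [h1, h2]
  have hBsiz : B (es.symm z) z = 0 := by
    have hc : ((B (es.symm z) z : ℤ) : ℚ) = 0 := by
      rw [← hBqtm, hsiz]
      exact horth zt hzF1 zt hz
    exact_mod_cast hc

  -- ℚ-level setup
  set Nq := Sq B s z - 1 with hNqdef
  have hNq_apply : ∀ p : ℚ × V, Nq p = (-(Bq p.2 zt), p.1 • zt + tq p.2) := by
    intro p
    rw [hNqdef]
    rw [LinearMap.sub_apply, Sq_apply]
    refine Prod.ext ?_ ?_
    · show p.1 - Bq p.2 zt - p.1 = -(Bq p.2 zt)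
      ring
    · show p.1 • zt + LinearMap.baseChange ℚ s p.2 - p.2 = p.1 • zt + tq p.2
      rw [htq]
      simp only [LinearMap.sub_apply, Module.End.one_apply]
      abel
  have hTN : LinearMap.baseChange ℚ (blowupAut B s z) - 1
      = (eqv (K := K)).symm.toLinearMap ∘ₗ Nq ∘ₗ (eqv (K := K)).toLinearMap := by
    apply LinearMap.ext
    intro u
    rw [hNqdef]
    simp only [LinearMap.sub_apply, Module.End.one_apply, LinearMap.comp_apply,
      LinearEquiv.coe_coe, map_sub, LinearEquiv.symm_apply_apply]
    rw [conj_blowupAut B s z]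
    simp
  have claim1 : ∀ p : ℚ × V, (Nq p).2 ∈ F1 := by
    intro p
    rw [hNq_apply]
    exact F1.add_mem (F1.smul_mem _ hzF1) (hrange (LinearMap.mem_range_self _ _))
  have claim2 : ∀ p : ℚ × V, p.2 ∈ F1 → (Nq p).1 = 0 ∧ (Nq p).2 ∈ F2 := by
    intro p hp
    rw [hNq_apply]
    constructor
    · show -(Bq p.2 zt) = 0
      rw [horth p.2 hp zt hz, neg_zero]
    · exact F2.add_mem (F2.smul_mem _ hz) (hmapF1 (Submodule.mem_map_of_mem hp))
  have claim3 : ∀ p : ℚ × V, p.1 = 0 → p.2 ∈ F2 → Nq p = 0 := by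
    intro p hp1 hp2
    rw [hNq_apply]
    have h1 : Bq p.2 zt = 0 := horth p.2 (hF21 hp2) zt hz
    have h2 : tq p.2 = 0 := by
      have : tq p.2 ∈ Submodule.map tq F2 := Submodule.mem_map_of_mem hp2
      rw [hmapF2] at this
      simpa using this
    rw [h1, h2, hp1, neg_zero, zero_smul, add_zero]
    rfl
  set n := Module.finrank ℚ V with hn
  have hn2 : 2 ≤ n := by
    have h1 : Module.finrank ℚ F2 ≤ Module.finrank ℚ F1 := Submodule.finrank_mono hF21
    rw [hd1, hd2] at h1
    omega
  have hn1 : Module.finrank ℚ (ℚ ⊗[ℤ] (ℤ × K)) = n + 1 := by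
    rw [(eqv (K := K)).finrank_eq, Module.finrank_prod, Module.finrank_self]
    show 1 + n = n + 1
    omega
  refine ⟨?_, ⟨?_, ?_⟩, ?_, ⟨?_, ?_⟩, ?_⟩
  · -- nondegeneracy
    intro p hp
    have h1 := hp (1, 0)
    rw [blowupForm_apply] at h1
    simp at h1
    have h2 : ∀ w, B p.2 w = 0 := by
      intro w
      have := hp (0, w)
      rw [blowupForm_apply] at this
      simpa [h1] using this
    have := hB p.2 h2
    ext
    · exact h1
    · exact this
  · -- injective
    intro p q hpq
    rw [blowupAut_apply, blowupAut_apply, Prod.mk.injEq] at hpq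
    obtain ⟨h1, h2⟩ := hpq
    have h3 : s (p.2 - q.2) = (q.1 - p.1) • z := by
      rw [map_sub]
      have : s p.2 - s q.2 = q.1 • z - p.1 • z := by linear_combination (norm := abel) h2
      rw [this, sub_smul]
    have h4 : p.2 - q.2 = (q.1 - p.1) • (es.symm z) := by
      apply es.injective
      show s (p.2 - q.2) = s _
      rw [h3, map_smul]
      rw [hsi]
    have h5 : B (p.2 - q.2) z = 0 := by
      rw [h4, map_smul, LinearMap.smul_apply, hBsiz, smul_zero]
    rw [map_sub, LinearMap.sub_apply] at h5
    have h6 : B p.2 z = B q.2 z := by omega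
    have h7 : p.1 = q.1 := by omega
    have h8 : p.2 = q.2 := by
      apply es.injective
      show s p.2 = s q.2
      have : p.1 • z + s p.2 = p.1 • z + s q.2 := by rw [h2, h7]
      exact add_left_cancel this
    exact Prod.ext h7 h8
  · -- surjective
    rintro ⟨b, w⟩
    refine ⟨(b + B (es.symm w) z, es.symm w - (b + B (es.symm w) z) • (es.symm z)), ?_⟩
    rw [blowupAut_apply]
    set a := b + B (es.symm w) z with ha
    have hByz : B (es.symm w - a • es.symm z) z = a - b := by
      rw [map_sub, LinearMap.sub_apply, map_smul, LinearMap.smul_apply, hBsiz, smul_zero,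
        sub_zero, ha]
      ring
    have hsy : s (es.symm w - a • es.symm z) = w - a • z := by
      rw [map_sub, map_smul, hsi, hsi]
    ext
    · simp only [hByz]; ring
    · simp only [hsy]; abel
  · -- Serre property
    intro p q
    rw [blowupForm_apply, blowupForm_apply, blowupAut_apply]
    simp only [map_add, map_smul, LinearMap.add_apply, LinearMap.smul_apply, smul_eq_mul]
    have e1 : B z (s q.2) = B q.2 z := hserre z q.2
    have e2 : B p.2 (s q.2) = B q.2 p.2 := hserre p.2 q.2
    have e3 : B p.2 z = B z p.2 := hBxz p.2
    rw [e1, e2, hBzz, e3]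
    ring
  · -- unipotent
    have h3 : Nq ^ 3 = 0 := by
      apply LinearMap.ext
      intro p
      have c2 := claim2 (Nq p) (claim1 p)
      have c3 := claim3 (Nq (Nq p)) c2.1 c2.2
      show (Nq ^ 3) p = 0
      simp only [pow_succ, pow_zero, one_mul, Module.End.mul_apply, LinearMap.zero_apply]
      exact c3
    have hNpow : Nq ^ (n + 1) = 0 := by
      have he : n + 1 = 3 + (n - 2) := by omega
      rw [he, pow_add, h3, zero_mul]
    rw [hTN, hn1]
    have hconjpow : ∀ m : ℕ,
        ((eqv (K := K)).symm.toLinearMap ∘ₗ Nq ∘ₗ (eqv (K := K)).toLinearMap) ^ m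
          = (eqv (K := K)).symm.toLinearMap ∘ₗ (Nq ^ m) ∘ₗ (eqv (K := K)).toLinearMap := by
      intro m
      induction m with
      | zero =>
        apply LinearMap.ext; intro u
        simp
      | succ k ih =>
        rw [pow_succ, pow_succ, ih]
        apply LinearMap.ext; intro u
        simp [Module.End.mul_apply]
    rw [hconjpow, hNpow]
    apply LinearMap.ext; intro u
    simp
  · -- rank ≤ 2
    have hrangeN : LinearMap.range (LinearMap.baseChange ℚ (blowupAut B s z) - 1)
        = Submodule.map (eqv (K := K)).symm.toLinearMap (LinearMap.range Nq) := by
      rw [hTN, LinearMap.range_comp, LinearMap.range_comp, LinearEquiv.range,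
        Submodule.map_top]
    rw [hrangeN, LinearEquiv.finrank_map_eq]
    by_cases hz0 : zt = 0
    · have hsub : LinearMap.range Nq
          ≤ Submodule.map (LinearMap.inr ℚ ℚ V) (LinearMap.range tq) := by
        rintro x ⟨p, rfl⟩
        refine ⟨tq p.2, LinearMap.mem_range_self _ _, ?_⟩
        rw [hNq_apply]
        simp [hz0]
      calc Module.finrank ℚ (LinearMap.range Nq)
          ≤ Module.finrank ℚ (Submodule.map (LinearMap.inr ℚ ℚ V) (LinearMap.range tq)) :=
            Submodule.finrank_mono hsub
        _ ≤ Module.finrank ℚ (LinearMap.range tq) := Submodule.finrank_map_le _ _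
        _ ≤ 2 := hsurf.2
    · have hspan : F2 = Submodule.span ℚ {zt} := by
        symm
        apply Submodule.eq_of_le_of_finrank_le
        · rw [Submodule.span_le, Set.singleton_subset_iff]
          exact hz
        · rw [hd2, finrank_span_singleton hz0]
      set L := (LinearMap.fst ℚ ℚ V).smulRight zt + tq ∘ₗ LinearMap.snd ℚ ℚ V with hL
      have hLapp : ∀ p : ℚ × V, L p = p.1 • zt + tq p.2 := by
        intro p
        rw [hL]
        simp
      set W := Submodule.comap (LinearMap.snd ℚ ℚ V) F1 ⊓ LinearMap.ker L with hW
      have hWker : W ≤ LinearMap.ker Nq := by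
        intro p hp
        obtain ⟨hp1, hp2⟩ := Submodule.mem_inf.mp hp
        have hp1' : p.2 ∈ F1 := hp1
        have hp2' : L p = 0 := hp2
        rw [hLapp] at hp2'
        rw [LinearMap.mem_ker, hNq_apply, hp2', horth p.2 hp1' zt hz, neg_zero]
        rfl
      have hF1W : F1 ≤ Submodule.map (LinearMap.snd ℚ ℚ V) W := by
        intro y hy
        have hty : tq y ∈ Submodule.span ℚ {zt} := by
          rw [← hspan]
          exact hmapF1 (Submodule.mem_map_of_mem hy)
        obtain ⟨c, hc⟩ := Submodule.mem_span_singleton.mp hty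
        refine ⟨(-c, y), Submodule.mem_inf.mpr ⟨hy, ?_⟩, rfl⟩
        rw [LinearMap.mem_ker, hLapp]
        show (-c) • zt + tq y = 0
        rw [← hc, neg_smul, neg_add_cancel]
      have hkerge : n - 1 ≤ Module.finrank ℚ (LinearMap.ker Nq) := by
        calc n - 1 = Module.finrank ℚ F1 := hd1.symm
          _ ≤ Module.finrank ℚ (Submodule.map (LinearMap.snd ℚ ℚ V) W) :=
              Submodule.finrank_mono hF1W
          _ ≤ Module.finrank ℚ W := Submodule.finrank_map_le _ _
          _ ≤ Module.finrank ℚ (LinearMap.ker Nq) := Submodule.finrank_mono hWker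
      have hrn := LinearMap.finrank_range_add_finrank_ker Nq
      rw [Module.finrank_prod, Module.finrank_self] at hrn
      have hnn : Module.finrank ℚ (ℚ ⊗[ℤ] K) = n := rfl
      rw [hnn] at hrn
      omega
  · -- codimension filtration
    unfold IsCodimFiltration
    set jQ := LinearMap.baseChange ℚ (LinearMap.inr ℤ ℤ K) with hjQ
    set ft : ℚ ⊗[ℤ] (ℤ × K) := (1:ℚ) ⊗ₜ[ℤ] (((1 : ℤ), (0 : K)) : ℤ × K) with hft
    have hejp : ∀ w : V, eqv (jQ w) = (0, w) := by
      intro w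
      have := DFunLike.congr_fun (eqv_comp_inr (K := K)) w
      exact this
    have hef : eqv ft = (1, 0) := by
      rw [hft]
      simp
    have hmem1 : ∀ u : ℚ ⊗[ℤ] (ℤ × K),
        (u ∈ Submodule.map jQ F1 ⊔ Submodule.span ℚ {ft}) ↔ ((eqv u).2 ∈ F1) := by
      intro u
      constructor
      · intro hu
        obtain ⟨v1, hv1, v2, hv2, rfl⟩ := Submodule.mem_sup.mp hu
        obtain ⟨x, hx, rfl⟩ := hv1
        obtain ⟨c, rfl⟩ := Submodule.mem_span_singleton.mp hv2
        simp only [map_add, map_smul, hejp, hef, Prod.snd_add, Prod.smul_snd, smul_zero,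
          add_zero]
        exact hx
      · intro hu
        have hrep : u = (eqv u).1 • ft + jQ ((eqv u).2) := by
          apply eqv.injective
          rw [map_add, map_smul, hejp, hef]
          refine Prod.ext ?_ ?_ <;> simp
        rw [hrep]
        exact Submodule.add_mem _
          (Submodule.mem_sup_right (Submodule.smul_mem _ _ (Submodule.mem_span_singleton_self ft)))
          (Submodule.mem_sup_left (Submodule.mem_map_of_mem hu))
    have hsymm0 : ∀ x : V, (eqv (K := K)).symm (0, x) = jQ x := by
      intro x
      apply eqv.injective
      rw [eqv.apply_symm_apply, hejp]
    have hjinj : Function.Injective jQ := by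
      intro x y hxy
      have h := congrArg (eqv (K := K)) hxy
      rw [hejp, hejp] at h
      exact (Prod.ext_iff.mp h).2
    refine ⟨?_, ?_, ?_, ?_, ?_, ?_, ?_⟩
    · exact le_trans (Submodule.map_mono hF21) le_sup_left
    · rintro u ⟨w, rfl⟩
      rw [hmem1, hTN]
      simp only [LinearMap.comp_apply, LinearEquiv.coe_coe, LinearEquiv.apply_symm_apply]
      exact claim1 (eqv w)
    · rintro u ⟨w, hw, rfl⟩
      have hw' := (hmem1 w).mp hw
      have c2 := claim2 (eqv w) hw'
      refine ⟨(Nq (eqv w)).2, c2.2, ?_⟩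
      rw [hTN]
      simp only [LinearMap.comp_apply, LinearEquiv.coe_coe]
      rw [← hsymm0]
      congr 1
      have hpair : Nq (eqv w) = (0, (Nq (eqv w)).2) := by
        refine Prod.ext ?_ rfl
        show (Nq (eqv w)).1 = 0
        exact c2.1
      exact hpair.symm
    · apply (Submodule.eq_bot_iff _).mpr
      rintro u ⟨w, hw, rfl⟩
      obtain ⟨v, hv, rfl⟩ := hw
      rw [hTN]
      simp only [LinearMap.comp_apply, LinearEquiv.coe_coe]
      rw [hejp, claim3 (0, v) rfl hv, map_zero]
    · -- finrank F̃1
      have hrk1 : Module.finrank ℚ (Submodule.map jQ F1) = n - 1 := by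
        rw [← hd1]
        exact (LinearEquiv.finrank_eq (Submodule.equivMapOfInjective jQ hjinj F1)).symm
      have hft0 : ft ≠ 0 := by
        intro h
        have h2 := congrArg (eqv (K := K)) h
        rw [hef, map_zero] at h2
        exact one_ne_zero (Prod.ext_iff.mp h2).1
      have hspanft : Module.finrank ℚ (Submodule.span ℚ {ft}) = 1 :=
        finrank_span_singleton hft0
      have hdisj : Submodule.map jQ F1 ⊓ Submodule.span ℚ {ft} = ⊥ := by
        apply (Submodule.eq_bot_iff _).mpr
        intro u hu
        obtain ⟨hu1, hu2⟩ := Submodule.mem_inf.mp hu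
        obtain ⟨c, rfl⟩ := Submodule.mem_span_singleton.mp hu2
        obtain ⟨v, hv, hveq⟩ := hu1
        have h := congrArg (eqv (K := K)) hveq
        rw [hejp, map_smul, hef] at h
        have hc : (0 : ℚ) = c := by
          have := (Prod.ext_iff.mp h).1
          simpa using this
        rw [← hc, zero_smul]
      have hsum := Submodule.finrank_sup_add_finrank_inf_eq
        (Submodule.map jQ F1) (Submodule.span ℚ {ft})
      rw [hdisj, finrank_bot, hrk1, hspanft] at hsum
      rw [hn1]
      omega
    · rw [← hd2]
      exact (LinearEquiv.finrank_eq (Submodule.equivMapOfInjective jQ hjinj F2)).symm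
    · intro v hv w hw
      obtain ⟨w', hw', rfl⟩ := hw
      obtain ⟨v1, hv1, v2, hv2, rfl⟩ := Submodule.mem_sup.mp hv
      obtain ⟨u, hu, rfl⟩ := hv1
      obtain ⟨c, rfl⟩ := Submodule.mem_span_singleton.mp hv2
      rw [hjQ, hft]
      simp only [map_add, map_smul, LinearMap.add_apply, LinearMap.smul_apply]
      rw [hB1 B z u w', hB2 B z w']
      rw [horth u hu w' hw', horth zt hzF1 w' hw', smul_zero, add_zero]
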